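/- Let L = A_2 and h the reflection r_{v_1} (h(v_1) = -v_1, h(v_2) = v_1 + v_2). Then K = M + N is spanned by {(v_1,0),(0,v_1),(v_2,v_2)}, has determinant 12, and is isometric to the even sublattice of the rectangular lattice Z² ⊥ √3·Z. -/

import Mathlib

/-- The `A₂` bilinear form in coordinates with respect to the standard basis
`v₁, v₂` (Gram matrix `[[2,-1],[-1,2]]`). -/
def A2form (x y : Fin 2 → ℤ) : ℤ :=
  2 * x 0 * y 0 - x 0 * y 1 - x 1 * y 0 + 2 * x 1 * y 1

/-- The form on `A₂ ⊥ A₂` in coordinates. -/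
def A2form2 (x y : (Fin 2 → ℤ) × (Fin 2 → ℤ)) : ℤ := A2form x.1 y.1 + A2form x.2 y.2

/-- The bilinear form of the rectangular lattice `ℤ² ⊥ √3·ℤ`. -/
def Rform (x y : Fin 3 → ℤ) : ℤ := x 0 * y 0 + x 1 * y 1 + 3 * (x 2 * y 2)

/-- The even sublattice of the rectangular lattice `ℤ² ⊥ √3·ℤ`. -/
def Esub : Submodule ℤ (Fin 3 → ℤ) where
  carrier := {x | Even (Rform x x)}
  zero_mem' := by simp [Rform]
  add_mem' := by
    intro a b ha hb
    have h : Rform (a + b) (a + b) = Rform a a + Rform b b + 2 * Rform a b := by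
      simp only [Rform, Pi.add_apply]; ring
    simp only [Set.mem_setOf_eq] at *
    rw [h]
    exact (ha.add hb).add (even_two_mul _)
  smul_mem' := by
    intro c x hx
    have h : Rform (c • x) (c • x) = c * c * Rform x x := by
      simp only [Rform, Pi.smul_apply, smul_eq_mul]; ring
    simp only [Set.mem_setOf_eq] at *
    rw [h]
    exact hx.mul_left _

def phi : ((Fin 2 → ℤ) × (Fin 2 → ℤ)) →ₗ[ℤ] (Fin 3 → ℤ) where
  toFun p := ![p.1 0 + p.2 0 - p.1 1, p.1 0 - p.2 0, p.1 1]
  map_add' p q := by funext i; fin_cases i <;> simp <;> ring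
  map_smul' c p := by funext i; fin_cases i <;> simp <;> ring

def Ksub : Submodule ℤ ((Fin 2 → ℤ) × (Fin 2 → ℤ)) where
  carrier := {p | p.1 1 = p.2 1}
  zero_mem' := rfl
  add_mem' := by
    intro a b ha hb
    simp only [Set.mem_setOf_eq] at *
    simp [ha, hb]
  smul_mem' := by
    intro c x hx
    simp only [Set.mem_setOf_eq] at *
    simp [hx]

lemma parity3 {p q r : ℤ} (hpq : Even (p*p + q*q + 3*(r*r))) : (2:ℤ) ∣ (p + q + r) := by
  have sq : ∀ x : ZMod 2, x * x = x := by decide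
  have h2 : ((p*p + q*q + 3*(r*r) : ℤ) : ZMod 2) = 0 := by
    rw [ZMod.intCast_zmod_eq_zero_iff_dvd]
    exact hpq.two_dvd
  push_cast at h2
  rw [sq, sq, sq] at h2
  have h3 : (3 : ZMod 2) = 1 := by decide
  rw [h3, one_mul] at h2
  have := (ZMod.intCast_zmod_eq_zero_iff_dvd (p + q + r) 2).mp (by push_cast; exact h2)
  exact_mod_cast this

lemma phi_mem_Esub (p : (Fin 2 → ℤ) × (Fin 2 → ℤ)) : phi p ∈ Esub := by
  refine ⟨p.1 0 * p.1 0 + p.2 0 * p.2 0 + 2 * (p.1 1 * p.1 1)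
    - p.1 0 * p.1 1 - p.2 0 * p.1 1, ?_⟩
  show Rform (phi p) (phi p) = _
  simp [Rform, phi]
  ring

def myEquiv : Ksub ≃ₗ[ℤ] Esub where
  toFun v := ⟨phi v.1, phi_mem_Esub v.1⟩
  map_add' u v := by
    apply Subtype.ext
    exact phi.map_add u.1 v.1
  map_smul' c v := by
    apply Subtype.ext
    exact phi.map_smul c v.1
  invFun w := ⟨(![(w.1 0 + w.1 1 + w.1 2)/2, w.1 2],
                ![(w.1 0 + w.1 1 + w.1 2)/2 - w.1 1, w.1 2]), by
    show (![(w.1 0 + w.1 1 + w.1 2)/2, w.1 2] : Fin 2 → ℤ) 1 = _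
    simp⟩
  left_inv v := by
    obtain ⟨⟨x, y⟩, hv⟩ := v
    have hv' : x 1 = y 1 := hv
    apply Subtype.ext
    apply Prod.ext <;> funext i <;> fin_cases i <;> simp [phi] <;> omega
  right_inv w := by
    obtain ⟨w, hw⟩ := w
    have hd : (2:ℤ) ∣ (w 0 + w 1 + w 2) := parity3 (by simpa [Rform] using (show Even (Rform w w) from hw))
    obtain ⟨k, hk⟩ := hd
    apply Subtype.ext
    funext i
    fin_cases i <;> simp [phi] <;> omega

/-- For `L = A₂` (coordinates w.r.t. the basis `v₁, v₂`, so
`v₁ = ![1,0]`, `v₂ = ![0,1]`) and `h = r_{v₁}` (`h v₁ = -v₁`, `h v₂ = v₁ + v₂`),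
the lattice `K = M + N` is spanned by `{(v₁,0), (0,v₁), (v₂,v₂)}`, has
determinant `12`, and is isometric to the even sublattice of the rectangular
lattice `ℤ² ⊥ √3·ℤ`. -/
theorem stmt_11
    (h : (Fin 2 → ℤ) →ₗ[ℤ] (Fin 2 → ℤ))
    (hh : ∀ x : Fin 2 → ℤ, h x = ![x 1 - x 0, x 1])
    (M N K : Submodule ℤ ((Fin 2 → ℤ) × (Fin 2 → ℤ)))
    (hM : M = LinearMap.range ((LinearMap.id : (Fin 2 → ℤ) →ₗ[ℤ] (Fin 2 → ℤ)).prod LinearMap.id))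
    (hN : N = LinearMap.range ((LinearMap.id : (Fin 2 → ℤ) →ₗ[ℤ] (Fin 2 → ℤ)).prod h))
    (hK : K = M ⊔ N)
    (g : Fin 3 → (Fin 2 → ℤ) × (Fin 2 → ℤ))
    (hg : g = ![(![1, 0], ![0, 0]), (![0, 0], ![1, 0]), (![0, 1], ![0, 1])]) :
    K = Submodule.span ℤ (Set.range g) ∧
    (Matrix.of fun i j : Fin 3 => A2form2 (g i) (g j)).det = 12 ∧
    ∃ e : K ≃ₗ[ℤ] Esub, ∀ v w : K,
      A2form2 (v : (Fin 2 → ℤ) × (Fin 2 → ℤ)) (w : (Fin 2 → ℤ) × (Fin 2 → ℤ)) =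
        Rform ((e v : Fin 3 → ℤ)) ((e w : Fin 3 → ℤ)) := by
  have hKK : K = Ksub := by
    rw [hK, hM, hN]
    apply le_antisymm
    · apply sup_le
      · rintro p ⟨x, rfl⟩
        exact rfl
      · rintro p ⟨x, rfl⟩
        show x 1 = h x 1
        rw [hh]; simp
    · rintro ⟨x, y⟩ hv
      have hv' : x 1 = y 1 := hv
      refine Submodule.mem_sup.mpr
        ⟨(![x 0, x 1 - y 0 + x 0], ![x 0, x 1 - y 0 + x 0]), ⟨![x 0, x 1 - y 0 + x 0], rfl⟩,
         (![0, y 0 - x 0], h ![0, y 0 - x 0]), ⟨![0, y 0 - x 0], rfl⟩, ?_⟩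
      rw [hh]
      apply Prod.ext <;> funext i <;> fin_cases i <;> simp <;> omega
  have hspan : Submodule.span ℤ (Set.range g) = Ksub := by
    apply le_antisymm
    · rw [Submodule.span_le]
      rintro p ⟨i, rfl⟩
      fin_cases i <;> subst hg <;> exact rfl
    · rintro ⟨x, y⟩ hv
      have hv' : x 1 = y 1 := hv
      have hxy : (x, y) = x 0 • g 0 + y 0 • g 1 + x 1 • g 2 := by
        subst hg
        apply Prod.ext <;> funext i <;> fin_cases i <;> simp <;> omega
      rw [hxy]
      exact Submodule.add_mem _
        (Submodule.add_mem _
          (Submodule.smul_mem _ _ (Submodule.subset_span ⟨0, rfl⟩))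
          (Submodule.smul_mem _ _ (Submodule.subset_span ⟨1, rfl⟩)))
        (Submodule.smul_mem _ _ (Submodule.subset_span ⟨2, rfl⟩))
  refine ⟨hKK.trans hspan.symm, ?_, ?_⟩
  · subst hg
    simp [Matrix.det_fin_three, A2form2, A2form]
  · rw [hKK]
    refine ⟨myEquiv, ?_⟩
    rintro ⟨⟨x, y⟩, hv⟩ ⟨⟨z, t⟩, hw⟩
    have hv' : x 1 = y 1 := hv
    have hw' : z 1 = t 1 := hw
    show A2form2 (x, y) (z, t) = Rform (phi (x, y)) (phi (z, t))
    simp only [A2form2, A2form, Rform, phi, LinearMap.coe_mk, AddHom.coe_mk,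
      Matrix.cons_val_zero, Matrix.cons_val_one, Matrix.head_cons, Matrix.cons_val_two,
      Matrix.tail_cons]
    rw [hv', hw']
    ring
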